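/- arXiv:2310.07034 — 2 statements merged into one kernel-verified Lean document; each statement's English description precedes it below -/
import Mathlib

section
/- Let T : X → X be continuous on a compact metric space, φ : X → ℝ continuous. If φ is hyperbolic, i.e., sup over invariant probabilities μ of ∫φ dμ < P_top(T, φ), then lim_n (1/n) log ‖e^{S_nφ}‖_∞ < P_top(T, φ), where S_nφ = Σ_{i=0}^{n−1} φ∘T^i. Equivalently, if lim_n (1/n) sup_x S_nφ(x) ≥ P_top(T, φ), then there exists an invariant probability η with ∫φ dη = P_top(T, φ), so φ is not hyperbolic. -/
open MeasureTheory Filter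
open Set TopologicalSpace BoundedContinuousFunction NNReal ENNReal

lemma sum_clamp (y : ℝ) (K : ℕ) (hy : 0 ≤ y) :
    ∑ k ∈ Finset.range K, min 1 (max (y - k) 0) = min y K := by
  induction K with
  | zero => simp [hy]
  | succ K ih =>
    rw [Finset.sum_range_succ, ih]
    push_cast
    rcases le_total y K with h | h
    · rw [max_eq_right (by linarith), min_eq_right zero_le_one, min_eq_left h,
        min_eq_left (by linarith)]
      ring
    · rw [min_eq_right h, max_eq_left (by linarith)]
      rcases le_total y (K + 1) with h2 | h2
      · rw [min_eq_right (by linarith), min_eq_left h2]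
        ring
      · rw [min_eq_left (by linarith), min_eq_right h2]

section Riesz

variable {X : Type*} [MetricSpace X] [CompactSpace X] [Nonempty X]
  [MeasurableSpace X] [BorelSpace X]
  (Λ : (X → ℝ) → ℝ)

theorem riesz_repr_exists
    (hadd : ∀ f g : X → ℝ, Continuous f → Continuous g →
      Λ (fun x => f x + g x) = Λ f + Λ g)
    (hsmul : ∀ (r : ℝ) (f : X → ℝ), Continuous f → Λ (fun x => r * f x) = r * Λ f)
    (hpos : ∀ f : X → ℝ, Continuous f → (∀ x, 0 ≤ f x) → 0 ≤ Λ f)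
    (hone : Λ (fun _ => 1) = 1) :
    ∃ η : Measure X, IsProbabilityMeasure η ∧
      ∀ f : X → ℝ, Continuous f → ∫ x, f x ∂η = Λ f := by
  -- monotonicity of Λ
  have hmono : ∀ f g : X → ℝ, Continuous f → Continuous g → (∀ x, f x ≤ g x) →
      Λ f ≤ Λ g := by
    intro f g hf hg hle
    have h1 : Λ g = Λ f + Λ (fun x => g x - f x) := by
      rw [← hadd f (fun x => g x - f x) hf (hg.sub hf)]
      congr 1; funext x; ring
    have h2 : 0 ≤ Λ (fun x => g x - f x) :=
      hpos _ (hg.sub hf) fun x => by linarith [hle x]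
    linarith
  -- the ℝ≥0-linear functional on bounded continuous ℝ≥0-functions
  set Λ₀ : (CompactlySupportedContinuousMap X ℝ≥0) →ₗ[ℝ≥0] ℝ≥0 :=
    { toFun := fun g => (Λ (fun x => (g x : ℝ))).toNNReal
      map_add' := by
        intro g₁ g₂
        have hg₁ : Continuous fun x => ((g₁ x : ℝ)) :=
          NNReal.continuous_coe.comp g₁.continuous
        have hg₂ : Continuous fun x => ((g₂ x : ℝ)) :=
          NNReal.continuous_coe.comp g₂.continuous
        have : Λ (fun x => ((g₁ + g₂) x : ℝ)) = Λ (fun x => (g₁ x : ℝ)) + Λ (fun x => (g₂ x : ℝ)) := by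
          rw [← hadd _ _ hg₁ hg₂]; congr 1
        rw [this, Real.toNNReal_add (hpos _ hg₁ fun x => (g₁ x).2) (hpos _ hg₂ fun x => (g₂ x).2)]
      map_smul' := by
        intro c g
        have hg : Continuous fun x => ((g x : ℝ)) :=
          NNReal.continuous_coe.comp g.continuous
        have : Λ (fun x => ((c • g) x : ℝ)) = (c : ℝ) * Λ (fun x => (g x : ℝ)) := by
          rw [← hsmul _ _ hg]; congr 1
        have hr : 0 ≤ Λ (fun x => (g x : ℝ)) := hpos _ hg fun x => (g x).2
        dsimp only [RingHom.id_apply]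
        rw [this, Real.toNNReal_mul (NNReal.coe_nonneg c), Real.toNNReal_coe, smul_eq_mul] } with hΛ₀def
  have hΛ₀coe : ∀ g : CompactlySupportedContinuousMap X ℝ≥0, (Λ₀ g : ℝ) = Λ (fun x => (g x : ℝ)) := by
    intro g
    simp only [hΛ₀def, LinearMap.coe_mk, AddHom.coe_mk]
    exact Real.coe_toNNReal _ (hpos _ (NNReal.continuous_coe.comp g.continuous) fun x => (g x).2)
  -- the content
  set C : Content X :=
    { toFun := rieszContentAux Λ₀
      mono' := fun K₁ K₂ h => rieszContentAux_mono Λ₀ h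
      sup_le' := rieszContentAux_sup_le Λ₀
      sup_disjoint' := by
        intro K₁ K₂ hdis h₁c h₂c
        refine le_antisymm (rieszContentAux_sup_le Λ₀ K₁ K₂) ?_
        refine le_csInf (rieszContentAux_image_nonempty Λ₀ _) ?_
        rintro b ⟨f, hf, rfl⟩
        obtain ⟨h, h0, h1, h01⟩ := exists_continuous_zero_one_of_isClosed h₁c h₂c hdis
        have hcont1 : Continuous fun x => (f x : ℝ≥0) * Real.toNNReal (1 - h x) :=
          f.continuous.mul (continuous_real_toNNReal.comp (continuous_const.sub h.continuous))
        have hcont2 : Continuous fun x => (f x : ℝ≥0) * Real.toNNReal (h x) :=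
          f.continuous.mul (continuous_real_toNNReal.comp h.continuous)
        set ψ₁ : CompactlySupportedContinuousMap X ℝ≥0 := ⟨⟨_, hcont1⟩, HasCompactSupport.of_compactSpace _⟩
        set ψ₂ : CompactlySupportedContinuousMap X ℝ≥0 := ⟨⟨_, hcont2⟩, HasCompactSupport.of_compactSpace _⟩
        have hsum : ψ₁ + ψ₂ = f := by
          ext x
          have hx := h01 x
          simp only [ψ₁, ψ₂, CompactlySupportedContinuousMap.coe_mk, ContinuousMap.coe_mk,
            CompactlySupportedContinuousMap.coe_add, Pi.add_apply]
          rw [← mul_add]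
          have : Real.toNNReal (1 - h x) + Real.toNNReal (h x) = 1 := by
            apply NNReal.coe_injective
            push_cast
            rw [Real.coe_toNNReal _ (by linarith [hx.2, hx.1]),
              Real.coe_toNNReal _ hx.1]
            ring
          rw [this, mul_one]
        have hK₁ : ∀ x ∈ K₁, (1 : ℝ≥0) ≤ ψ₁ x := by
          intro x hx
          have : h x = 0 := h0 hx
          simp only [ψ₁, CompactlySupportedContinuousMap.coe_mk, ContinuousMap.coe_mk, this]
          norm_num
          exact hf x (Or.inl hx)
        have hK₂ : ∀ x ∈ K₂, (1 : ℝ≥0) ≤ ψ₂ x := by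
          intro x hx
          have : h x = 1 := h1 hx
          simp only [ψ₂, CompactlySupportedContinuousMap.coe_mk, ContinuousMap.coe_mk, this]
          norm_num
          exact hf x (Or.inr hx)
        calc rieszContentAux Λ₀ K₁ + rieszContentAux Λ₀ K₂
            ≤ Λ₀ ψ₁ + Λ₀ ψ₂ :=
              add_le_add (rieszContentAux_le Λ₀ hK₁) (rieszContentAux_le Λ₀ hK₂)
          _ = Λ₀ f := by rw [← map_add, hsum] }
  set η : Measure X := C.measure with hηdef
  have hηopen : ∀ (U : Set X) (hU : IsOpen U), η U = C.innerContent ⟨U, hU⟩ := by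
    intro U hU
    rw [hηdef, C.measure_apply hU.measurableSet, C.outerMeasure_of_isOpen U hU]
  have hCuniv : C.toFun ⟨univ, isCompact_univ⟩ = 1 := by
    apply le_antisymm
    · have h1 : ∀ x ∈ (⟨univ, isCompact_univ⟩ : Compacts X), (1 : ℝ≥0) ≤ (⟨1, HasCompactSupport.of_compactSpace _⟩ : CompactlySupportedContinuousMap X ℝ≥0) x := by
        intro x _; simp
      have h2 : (Λ₀ (⟨1, HasCompactSupport.of_compactSpace _⟩ : CompactlySupportedContinuousMap X ℝ≥0) : ℝ) = 1 := by
        rw [hΛ₀coe]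
        simpa using hone
      have := rieszContentAux_le Λ₀ h1
      calc C.toFun ⟨univ, isCompact_univ⟩ ≤ Λ₀ (⟨1, HasCompactSupport.of_compactSpace _⟩ : CompactlySupportedContinuousMap X ℝ≥0) := this
        _ = 1 := by exact_mod_cast h2
    · refine le_csInf (rieszContentAux_image_nonempty Λ₀ _) ?_
      rintro b ⟨ψ, hψ, rfl⟩
      have hψc : Continuous fun x => ((ψ x : ℝ)) := NNReal.continuous_coe.comp ψ.continuous
      have h1 : (1 : ℝ) ≤ (Λ₀ ψ : ℝ) := by
        rw [hΛ₀coe]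
        calc (1:ℝ) = Λ (fun _ => 1) := hone.symm
          _ ≤ Λ (fun x => (ψ x : ℝ)) := by
              refine hmono _ _ continuous_const hψc fun x => ?_
              exact_mod_cast hψ x (mem_univ x)
      exact_mod_cast h1
  have hηuniv : η univ = 1 := by
    rw [hηopen univ isOpen_univ, C.innerContent_of_isCompact isCompact_univ isOpen_univ]
    rw [show C ⟨univ, isCompact_univ⟩ = (C.toFun ⟨univ, isCompact_univ⟩ : ℝ≥0∞) from rfl, hCuniv]
    simp
  have hprob : IsProbabilityMeasure η := ⟨hηuniv⟩
  have hint : ∀ f : X → ℝ, Continuous f → Integrable f η := by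
    intro f hf
    have := BoundedContinuousFunction.integrable η (mkOfCompact ⟨f, hf⟩)
    exact this
  have hΛsum : ∀ (n : ℕ) (g : ℕ → X → ℝ), (∀ k, Continuous (g k)) →
      Λ (fun x => ∑ k ∈ Finset.range n, g k x) = ∑ k ∈ Finset.range n, Λ (g k) := by
    intro n g hg
    induction n with
    | zero =>
      simp only [Finset.range_zero, Finset.sum_empty]
      have h0 : Λ (fun _ => (0:ℝ)) = 0 := by
        have : Λ (fun _ : X => (0:ℝ) * (1:ℝ)) = 0 * Λ (fun _ => (1:ℝ)) :=
          hsmul 0 (fun _ => 1) continuous_const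
        simpa using this
      exact h0
    | succ n ih =>
      have hcont : Continuous fun x => ∑ k ∈ Finset.range n, g k x :=
        continuous_finset_sum _ fun k _ => hg k
      have h1 : Λ (fun x => (∑ k ∈ Finset.range n, g k x) + g n x)
          = Λ (fun x => ∑ k ∈ Finset.range n, g k x) + Λ (g n) :=
        hadd _ _ hcont (hg n)
      have h2 : (fun x => ∑ k ∈ Finset.range (n+1), g k x)
          = fun x => (∑ k ∈ Finset.range n, g k x) + g n x := by
        funext x; rw [Finset.sum_range_succ]
      rw [h2, h1, ih, Finset.sum_range_succ]
  have hΛconst : ∀ r : ℝ, Λ (fun _ => r) = r := by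
    intro r
    have : Λ (fun _ : X => r * (1:ℝ)) = r * Λ (fun _ => (1:ℝ)) :=
      hsmul r (fun _ => 1) continuous_const
    simpa [hone] using this
  -- representation for nonnegative functions
  have hrepr0 : ∀ f : X → ℝ, Continuous f → (∀ x, 0 ≤ f x) → ∫ x, f x ∂η = Λ f := by
    intro f hf hf0
    obtain ⟨z, -, hz⟩ := isCompact_univ.exists_isMaxOn univ_nonempty hf.continuousOn
    have hfM : ∀ x, f x ≤ f z := fun x => isMaxOn_iff.mp hz x (mem_univ x)
    have key : ∀ m : ℕ, 1 ≤ m → |∫ x, f x ∂η - Λ f| ≤ 1 / m := by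
      intro m hm
      have hm0 : (0:ℝ) < m := by exact_mod_cast hm
      set Kc := Nat.ceil ((m:ℝ) * f z) with hKcdef
      have hKcb : ∀ x, (m:ℝ) * f x ≤ Kc := fun x =>
        le_trans (mul_le_mul_of_nonneg_left (hfM x) hm0.le) (Nat.le_ceil _)
      set g : ℕ → X → ℝ := fun k x => min 1 (max ((m:ℝ) * f x - k) 0) with hgdef
      have hgc : ∀ k, Continuous (g k) := fun k =>
        continuous_const.min (((continuous_const.mul hf).sub continuous_const).max
          continuous_const)
      have hg0 : ∀ k x, 0 ≤ g k x := fun k x =>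
        le_min zero_le_one (le_max_right _ 0)
      have hg1 : ∀ k x, g k x ≤ 1 := fun k x => min_le_left _ _
      have hgsum : ∀ x, ∑ k ∈ Finset.range Kc, g k x = (m:ℝ) * f x := by
        intro x
        show ∑ k ∈ Finset.range Kc, min 1 (max ((m:ℝ) * f x - k) 0) = (m:ℝ) * f x
        rw [sum_clamp _ _ (mul_nonneg hm0.le (hf0 x))]
        exact min_eq_left (hKcb x)
      set U : ℕ → Set X := fun k => {x | (k:ℝ) < m * f x} with hUdef
      have hUopen : ∀ k, IsOpen (U k) :=
        fun k => isOpen_lt continuous_const (continuous_const.mul hf)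
      have hUsub : ∀ k, U (k+1) ⊆ U k := by
        intro k x hx
        have : ((k:ℝ)+1) < m * f x := by exact_mod_cast hx
        show (k:ℝ) < m * f x
        linarith
      set u : ℕ → ℝ := fun k => (η (U k)).toReal with hudef
      have hufin : ∀ k, η (U k) ≠ ⊤ := fun k => (measure_lt_top η _).ne
      have humono : ∀ k, u (k+1) ≤ u k := fun k =>
        ENNReal.toReal_mono (hufin k) (measure_mono (hUsub k))
      have hu0 : ∀ k, 0 ≤ u k := fun k => ENNReal.toReal_nonneg
      have hu1 : ∀ k, u k ≤ 1 := by
        intro k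
        have h1 : η (U k) ≤ η univ := measure_mono (subset_univ _)
        have := ENNReal.toReal_mono (by rw [hηuniv]; exact one_ne_top) h1
        rw [hηuniv] at this
        simpa using this
      -- g k = 1 on U (k+1), g k = 0 off U k
      have hgone : ∀ k x, x ∈ U (k+1) → g k x = 1 := by
        intro k x hx
        have hx' : ((k:ℝ)+1) < m * f x := by exact_mod_cast hx
        show min 1 (max ((m:ℝ) * f x - k) 0) = 1
        have h1 : (1:ℝ) ≤ max ((m:ℝ) * f x - k) 0 := le_max_of_le_left (by linarith)
        exact min_eq_left h1
      have hgzero : ∀ k x, x ∉ U k → g k x = 0 := by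
        intro k x hx
        have hx' : m * f x ≤ (k:ℝ) := not_lt.mp hx
        show min 1 (max ((m:ℝ) * f x - k) 0) = 0
        have h1 : max ((m:ℝ) * f x - k) 0 = 0 := max_eq_right (by linarith)
        rw [h1]
        exact min_eq_right zero_le_one
      have hind : ∀ k, ∫ x, (U k).indicator (fun _ => (1:ℝ)) x ∂η = u k := by
        intro k
        rw [integral_indicator_const _ (hUopen k).measurableSet]
        simp [hudef, measureReal_def]
      have hAup : ∀ k, ∫ x, g k x ∂η ≤ u k := by
        intro k
        rw [← hind k]
        refine integral_mono (hint _ (hgc k))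
          ((integrable_const (1:ℝ)).indicator (hUopen k).measurableSet) fun x => ?_
        by_cases hx : x ∈ U k
        · rw [indicator_of_mem hx]; exact hg1 k x
        · rw [indicator_of_notMem hx, hgzero k x hx]
      have hAlow : ∀ k, u (k+1) ≤ ∫ x, g k x ∂η := by
        intro k
        rw [← hind (k+1)]
        refine integral_mono
          ((integrable_const (1:ℝ)).indicator (hUopen (k+1)).measurableSet)
          (hint _ (hgc k)) fun x => ?_
        by_cases hx : x ∈ U (k+1)
        · rw [indicator_of_mem hx, hgone k x hx]
        · rw [indicator_of_notMem hx]; exact hg0 k x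
      have hBlow : ∀ k, u (k+1) ≤ Λ (g k) := by
        intro k
        have hΛg0 : 0 ≤ Λ (g k) := hpos _ (hgc k) (hg0 k)
        set gN : CompactlySupportedContinuousMap X ℝ≥0 :=
          ⟨⟨fun x => Real.toNNReal (g k x), continuous_real_toNNReal.comp (hgc k)⟩, HasCompactSupport.of_compactSpace _⟩ with hgNdef
        have hgNΛ : (Λ₀ gN : ℝ) = Λ (g k) := by
          rw [hΛ₀coe]
          congr 1
          funext x
          simp only [hgNdef, CompactlySupportedContinuousMap.coe_mk, ContinuousMap.coe_mk]
          exact Real.coe_toNNReal _ (hg0 k x)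
        have hinner : C.innerContent ⟨U (k+1), hUopen (k+1)⟩ ≤ ENNReal.ofReal (Λ (g k)) := by
          refine iSup₂_le fun L hL => ?_
          have h1L : ∀ x ∈ L, (1:ℝ≥0) ≤ gN x := by
            intro x hx
            have hxU := hL hx
            simp only [hgNdef, CompactlySupportedContinuousMap.coe_mk, ContinuousMap.coe_mk]
            rw [hgone k x hxU]
            simp
          have h2 := rieszContentAux_le Λ₀ h1L
          calc (C.toFun L : ℝ≥0∞) ≤ ((Λ₀ gN : ℝ≥0) : ℝ≥0∞) := by exact_mod_cast h2
            _ = ENNReal.ofReal (Λ (g k)) := by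
                rw [← hgNΛ, ENNReal.ofReal_coe_nnreal]
        have hη1 : η (U (k+1)) ≤ ENNReal.ofReal (Λ (g k)) := by
          rw [hηopen _ (hUopen (k+1))]; exact hinner
        calc u (k+1) ≤ (ENNReal.ofReal (Λ (g k))).toReal :=
              ENNReal.toReal_mono ENNReal.ofReal_ne_top hη1
          _ = Λ (g k) := ENNReal.toReal_ofReal hΛg0
      have hBup : ∀ k, Λ (g k) ≤ u k := by
        intro k
        refine le_of_forall_pos_le_add fun ε hε => ?_
        set Kε := {x | ε ≤ g k x} with hKεdef
        have hKεclosed : IsClosed Kε := isClosed_le continuous_const (hgc k)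
        have hKεsub : Kε ⊆ U k := by
          intro x hx
          by_contra hxU
          have h0 := hgzero k x hxU
          have hx' : ε ≤ g k x := hx
          rw [h0] at hx'
          linarith
        have hstep : ∀ ψ : CompactlySupportedContinuousMap X ℝ≥0,
            (∀ x ∈ (⟨Kε, hKεclosed.isCompact⟩ : Compacts X), (1:ℝ≥0) ≤ ψ x) →
            Λ (g k) - ε ≤ (Λ₀ ψ : ℝ) := by
          intro ψ hψ
          have hψc : Continuous fun x => ((ψ x : ℝ)) := NNReal.continuous_coe.comp ψ.continuous
          have hle : ∀ x, g k x ≤ (ψ x : ℝ) + ε := by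
            intro x
            by_cases hx : x ∈ Kε
            · have h1 : (1:ℝ) ≤ (ψ x : ℝ) := by exact_mod_cast hψ x hx
              have h2 := hg1 k x
              linarith
            · have h1 : g k x < ε := not_le.mp hx
              have h2 : (0:ℝ) ≤ (ψ x : ℝ) := (ψ x).2
              linarith
          have h3 : Λ (g k) ≤ Λ (fun x => (ψ x : ℝ) + ε) :=
            hmono _ _ (hgc k) (hψc.add continuous_const) hle
          have h4 : Λ (fun x => (ψ x : ℝ) + ε) = Λ (fun x => (ψ x : ℝ)) + Λ (fun _ => ε) :=
            hadd _ _ hψc continuous_const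
          rw [h4, hΛconst ε, ← hΛ₀coe] at h3
          linarith
        have hcontb : Λ (g k) - ε ≤ ((C.toFun ⟨Kε, hKεclosed.isCompact⟩ : ℝ≥0) : ℝ) := by
          rcases le_or_gt (Λ (g k) - ε) 0 with h | h
          · exact h.trans (C.toFun _).2
          · have h5 : (Λ (g k) - ε).toNNReal ≤ C.toFun ⟨Kε, hKεclosed.isCompact⟩ := by
              refine le_csInf (rieszContentAux_image_nonempty Λ₀ _) ?_
              rintro b ⟨ψ, hψ, rfl⟩
              have h6 := hstep ψ hψ
              calc (Λ (g k) - ε).toNNReal ≤ ((Λ₀ ψ : ℝ)).toNNReal := Real.toNNReal_mono h6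
                _ = Λ₀ ψ := Real.toNNReal_coe
            calc Λ (g k) - ε = ((Λ (g k) - ε).toNNReal : ℝ) := (Real.coe_toNNReal _ h.le).symm
              _ ≤ _ := by exact_mod_cast h5
        have hKle : ((C.toFun ⟨Kε, hKεclosed.isCompact⟩ : ℝ≥0) : ℝ≥0∞) ≤ η (U k) := by
          rw [hηopen _ (hUopen k)]
          exact C.le_innerContent _ _ hKεsub
        have h7 : ((C.toFun ⟨Kε, hKεclosed.isCompact⟩ : ℝ≥0) : ℝ) ≤ u k := by
          have := ENNReal.toReal_mono (hufin k) hKle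
          exact this
        linarith
      have hsumI : (m:ℝ) * ∫ x, f x ∂η = ∑ k ∈ Finset.range Kc, ∫ x, g k x ∂η := by
        rw [← integral_finset_sum _ (fun k _ => hint _ (hgc k))]
        rw [← integral_const_mul]
        congr 1
        funext x
        exact (hgsum x).symm
      have hsumL : (m:ℝ) * Λ f = ∑ k ∈ Finset.range Kc, Λ (g k) := by
        have h1 : Λ (fun x => (m:ℝ) * f x) = (m:ℝ) * Λ f := hsmul m f hf
        rw [← h1, ← hΛsum Kc g hgc]
        congr 1
        funext x
        exact (hgsum x).symm
      have habs : |(m:ℝ) * ∫ x, f x ∂η - (m:ℝ) * Λ f| ≤ 1 := by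
        rw [hsumI, hsumL, ← Finset.sum_sub_distrib]
        calc |∑ k ∈ Finset.range Kc, (∫ x, g k x ∂η - Λ (g k))|
            ≤ ∑ k ∈ Finset.range Kc, |∫ x, g k x ∂η - Λ (g k)| :=
              Finset.abs_sum_le_sum_abs _ _
          _ ≤ ∑ k ∈ Finset.range Kc, (u k - u (k+1)) := by
              refine Finset.sum_le_sum fun k _ => abs_le.mpr ⟨?_, ?_⟩
              · linarith [hAlow k, hBup k]
              · linarith [hAup k, hBlow k]
          _ = u 0 - u Kc := Finset.sum_range_sub' u Kc
          _ ≤ 1 := by linarith [hu1 0, hu0 Kc]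
      rw [show (m:ℝ) * ∫ x, f x ∂η - (m:ℝ) * Λ f = (m:ℝ) * (∫ x, f x ∂η - Λ f) by ring,
        abs_mul, abs_of_pos hm0] at habs
      rw [le_div_iff₀ hm0]
      linarith [habs]
    have hzero : |∫ x, f x ∂η - Λ f| = 0 := by
      by_contra hne
      have hpos' : 0 < |∫ x, f x ∂η - Λ f| := lt_of_le_of_ne (abs_nonneg _) (Ne.symm hne)
      obtain ⟨m, hm⟩ := exists_nat_one_div_lt hpos'
      have := key (m+1) (by omega)
      have hcast : ((m+1 : ℕ) : ℝ) = (m:ℝ) + 1 := by push_cast; ring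
      rw [hcast] at this
      linarith
    have := abs_eq_zero.mp hzero
    linarith
  refine ⟨η, hprob, ?_⟩
  intro f hf
  obtain ⟨z, -, hz⟩ := isCompact_univ.exists_isMinOn univ_nonempty hf.continuousOn
  have hfm : ∀ x, f z ≤ f x := fun x => isMinOn_iff.mp hz x (mem_univ x)
  set Cb : ℝ := -f z with hCbdef
  have h0 : ∀ x, 0 ≤ f x + Cb := fun x => by
    have := hfm x
    simp only [hCbdef]
    linarith
  have h1 : ∫ x, (f x + Cb) ∂η = Λ (fun x => f x + Cb) :=
    hrepr0 _ (hf.add continuous_const) h0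
  have h2 : Λ (fun x => f x + Cb) = Λ f + Cb := by
    have h3 : Λ (fun x => f x + (fun _ : X => Cb) x) = Λ f + Λ (fun _ => Cb) :=
      hadd f (fun _ => Cb) hf continuous_const
    rw [hΛconst] at h3
    exact h3
  rw [integral_add (hint f hf) (integrable_const _), integral_const, h2] at h1
  have h4 : (η univ).toReal = 1 := by rw [hηuniv]; simp
  rw [measureReal_def, h4, smul_eq_mul, one_mul] at h1
  linarith

end Riesz


/-- If `φ` is hyperbolic, i.e. `sup_μ ∫ φ dμ < P = P_top(T, φ)` over invariant
probability measures, then `lim (1/n) log ‖e^{S_nφ}‖_∞ = lim (1/n) sup_x S_nφ(x)`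
is strictly smaller than `P`. -/
theorem hyperbolic_potential_birkhoff_sup_lt_pressure
    {X : Type*} [MetricSpace X] [CompactSpace X] [Nonempty X]
    [MeasurableSpace X] [BorelSpace X]
    (T : X → X) (hT : Continuous T) (φ : X → ℝ) (hφ : Continuous φ)
    (P : ℝ)
    (hhyp : ∃ c : ℝ, c < P ∧ ∀ μ : Measure X, IsProbabilityMeasure μ →
      MeasurePreserving T μ μ → ∫ x, φ x ∂μ ≤ c) :
    limsup (fun n : ℕ => (⨆ x : X, ∑ i ∈ Finset.range n, φ (T^[i] x)) / (n : ℝ)) atTop < P := by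
  by_contra hcon
  push_neg at hcon
  obtain ⟨c, hcP, hc⟩ := hhyp
  obtain ⟨zφ, -, hzφ⟩ := isCompact_univ.exists_isMaxOn univ_nonempty hφ.abs.continuousOn
  set Mφ : ℝ := |φ zφ| with hMφdef
  have hφM : ∀ x, |φ x| ≤ Mφ := fun x => isMaxOn_iff.mp hzφ x (mem_univ x)
  have hMφ0 : 0 ≤ Mφ := abs_nonneg _
  have hScont : ∀ n : ℕ, Continuous fun y : X => ∑ i ∈ Finset.range n, φ (T^[i] y) :=
    fun n => continuous_finset_sum _ fun i _ => hφ.comp (hT.iterate i)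
  have hxm' : ∀ n : ℕ, ∃ x : X, ∀ y : X,
      ∑ i ∈ Finset.range n, φ (T^[i] y) ≤ ∑ i ∈ Finset.range n, φ (T^[i] x) := by
    intro n
    obtain ⟨x, -, hx⟩ := isCompact_univ.exists_isMaxOn univ_nonempty (hScont n).continuousOn
    exact ⟨x, fun y => isMaxOn_iff.mp hx y (mem_univ y)⟩
  choose xm hxm using hxm'
  have hsup : ∀ n : ℕ, (⨆ x : X, ∑ i ∈ Finset.range n, φ (T^[i] x))
      = ∑ i ∈ Finset.range n, φ (T^[i] (xm n)) := by
    intro n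
    have hbA : BddAbove (Set.range fun y : X => ∑ i ∈ Finset.range n, φ (T^[i] y)) :=
      ⟨∑ i ∈ Finset.range n, φ (T^[i] (xm n)), by rintro _ ⟨y, rfl⟩; exact hxm n y⟩
    exact le_antisymm (ciSup_le (hxm n)) (le_ciSup hbA (xm n))
  set b : ℕ → ℝ :=
    fun n => (⨆ x : X, ∑ i ∈ Finset.range n, φ (T^[i] x)) / (n : ℝ) with hbdef
  have hSbound : ∀ (n : ℕ) (x : X), |∑ i ∈ Finset.range n, φ (T^[i] x)| ≤ n * Mφ := by
    intro n x
    calc |∑ i ∈ Finset.range n, φ (T^[i] x)|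
        ≤ ∑ i ∈ Finset.range n, |φ (T^[i] x)| := Finset.abs_sum_le_sum_abs _ _
      _ ≤ ∑ i ∈ Finset.range n, Mφ := Finset.sum_le_sum fun i _ => hφM _
      _ = n * Mφ := by rw [Finset.sum_const, Finset.card_range, nsmul_eq_mul]
  have hbbound : ∀ n, |b n| ≤ Mφ := by
    intro n
    rcases Nat.eq_zero_or_pos n with rfl | hn
    · simp [hbdef, ciSup_const, hMφ0]
    · have hnp : (0:ℝ) < n := by exact_mod_cast hn
      simp only [hbdef]
      rw [hsup n, abs_div, abs_of_pos hnp, div_le_iff₀ hnp]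
      calc |∑ i ∈ Finset.range n, φ (T^[i] (xm n))| ≤ n * Mφ := hSbound n _
        _ = Mφ * n := mul_comm _ _
  set L : ℝ := Filter.limsup b Filter.atTop with hLdef
  have hPL : P ≤ L := hcon
  set ε : ℝ := (P - c)/2 with hεdef
  have hε : 0 < ε := by rw [hεdef]; linarith
  have hbboundBelow : Filter.IsBoundedUnder (· ≥ ·) Filter.atTop b :=
    ⟨-Mφ, Filter.eventually_map.mpr (Filter.Eventually.of_forall fun n => (abs_le.mp (hbbound n)).1)⟩
  have hfreq : ∃ᶠ n in Filter.atTop, L - ε < b n :=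
    Filter.frequently_lt_of_lt_limsup hbboundBelow.isCoboundedUnder_le (by linarith)
  set Sset : Set ℕ := {n | L - ε < b n} with hSsetdef
  have hFne : (Filter.atTop ⊓ Filter.principal Sset).NeBot := by
    rw [Filter.inf_principal_neBot_iff]
    intro U hU
    have hU' : ∀ᶠ n in Filter.atTop, n ∈ U := hU
    obtain ⟨n, hn1, hn2⟩ := (hfreq.and_eventually hU').exists
    exact ⟨n, hn2, hn1⟩
  set 𝒰 : Ultrafilter ℕ := @Ultrafilter.of _ (Filter.atTop ⊓ Filter.principal Sset) hFne
    with h𝒰def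
  have h𝒰le : (𝒰 : Filter ℕ) ≤ Filter.atTop ⊓ Filter.principal Sset := Ultrafilter.of_le _
  have h𝒰top : (𝒰 : Filter ℕ) ≤ Filter.atTop := h𝒰le.trans inf_le_left
  have h𝒰S : Sset ∈ (𝒰 : Filter ℕ) :=
    (h𝒰le.trans inf_le_right) (Filter.mem_principal_self _)
  set I : (X → ℝ) → ℕ → ℝ :=
    fun f n => (n:ℝ)⁻¹ * ∑ i ∈ Finset.range n, f (T^[i] (xm n)) with hIdef
  have hIbound : ∀ (f : X → ℝ) (Mf : ℝ), 0 ≤ Mf → (∀ x, |f x| ≤ Mf) →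
      ∀ n, I f n ∈ Set.Icc (-Mf) Mf := by
    intro f Mf hMf0 hMf n
    rcases Nat.eq_zero_or_pos n with rfl | hn
    · have h0 : I f 0 = 0 := by simp [hIdef]
      rw [h0]
      exact ⟨by linarith, hMf0⟩
    · have hnp : (0:ℝ) < n := by exact_mod_cast hn
      have h1 : |I f n| ≤ Mf := by
        simp only [hIdef]
        rw [abs_mul, abs_inv, Nat.abs_cast]
        calc (n:ℝ)⁻¹ * |∑ i ∈ Finset.range n, f (T^[i] (xm n))|
            ≤ (n:ℝ)⁻¹ * (n * Mf) := by
              refine mul_le_mul_of_nonneg_left ?_ (inv_nonneg.mpr hnp.le)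
              calc |∑ i ∈ Finset.range n, f (T^[i] (xm n))|
                  ≤ ∑ i ∈ Finset.range n, |f (T^[i] (xm n))| := Finset.abs_sum_le_sum_abs _ _
                _ ≤ ∑ i ∈ Finset.range n, Mf := Finset.sum_le_sum fun i _ => hMf _
                _ = n * Mf := by rw [Finset.sum_const, Finset.card_range, nsmul_eq_mul]
          _ = Mf := by field_simp
      exact abs_le.mp h1
  have hex : ∀ f : X → ℝ, ∃ a : ℝ, Continuous f →
      Filter.Tendsto (I f) (𝒰 : Filter ℕ) (nhds a) := by
    intro f
    by_cases hf : Continuous f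
    · obtain ⟨zf, -, hzf⟩ := isCompact_univ.exists_isMaxOn univ_nonempty hf.abs.continuousOn
      have hMf : ∀ x, |f x| ≤ |f zf| := fun x => isMaxOn_iff.mp hzf x (mem_univ x)
      have hmem : Set.Icc (-(|f zf|)) (|f zf|) ∈ Ultrafilter.map (I f) 𝒰 := by
        rw [Ultrafilter.mem_map]
        exact Filter.univ_mem' (hIbound f _ (abs_nonneg _) hMf)
      obtain ⟨a, -, ha⟩ := isCompact_Icc.ultrafilter_le_nhds (Ultrafilter.map (I f) 𝒰)
        (Filter.le_principal_iff.mpr hmem)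
      refine ⟨a, fun _ => ?_⟩
      have : (Filter.map (I f) (𝒰 : Filter ℕ)) ≤ nhds a := by
        rw [← Ultrafilter.coe_map]; exact ha
      exact this
    · exact ⟨0, fun h => absurd h hf⟩
  choose Λ hItend' using hex
  have hItend : ∀ f : X → ℝ, Continuous f →
      Filter.Tendsto (I f) (𝒰 : Filter ℕ) (nhds (Λ f)) := fun f hf => hItend' f hf
  have hadd : ∀ f g : X → ℝ, Continuous f → Continuous g →
      Λ (fun x => f x + g x) = Λ f + Λ g := by
    intro f g hf hg
    have h1 : I (fun x => f x + g x) = fun n => I f n + I g n := by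
      funext n
      simp only [hIdef]
      rw [Finset.sum_add_distrib]
      ring
    have h2 : Filter.Tendsto (I fun x => f x + g x) (𝒰 : Filter ℕ) (nhds (Λ f + Λ g)) := by
      rw [h1]
      exact (hItend f hf).add (hItend g hg)
    exact tendsto_nhds_unique (hItend _ (hf.add hg)) h2
  have hsmul : ∀ (r : ℝ) (f : X → ℝ), Continuous f → Λ (fun x => r * f x) = r * Λ f := by
    intro r f hf
    have h1 : I (fun x => r * f x) = fun n => r * I f n := by
      funext n
      simp only [hIdef]
      rw [← Finset.mul_sum]
      ring
    have h2 : Filter.Tendsto (I fun x => r * f x) (𝒰 : Filter ℕ) (nhds (r * Λ f)) := by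
      rw [h1]
      exact (hItend f hf).const_mul r
    exact tendsto_nhds_unique (hItend _ (continuous_const.mul hf)) h2
  have hpos : ∀ f : X → ℝ, Continuous f → (∀ x, 0 ≤ f x) → 0 ≤ Λ f := by
    intro f hf hf0
    refine ge_of_tendsto' (hItend f hf) fun n => ?_
    simp only [hIdef]
    exact mul_nonneg (inv_nonneg.mpr (Nat.cast_nonneg n))
      (Finset.sum_nonneg fun i _ => hf0 _)
  have hone : Λ (fun _ => (1:ℝ)) = 1 := by
    have h1 : ∀ᶠ n in (𝒰 : Filter ℕ), I (fun _ => (1:ℝ)) n = 1 := by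
      filter_upwards [h𝒰top (Filter.eventually_ge_atTop 1)] with n hn
      have hnne : (n:ℝ) ≠ 0 := by positivity
      simp only [hIdef]
      rw [Finset.sum_const, Finset.card_range, nsmul_eq_mul, mul_one]
      exact inv_mul_cancel₀ hnne
    have h2 : Filter.Tendsto (I fun _ => (1:ℝ)) (𝒰 : Filter ℕ) (nhds 1) :=
      Filter.Tendsto.congr' (by filter_upwards [h1] with n hn; exact hn.symm)
        tendsto_const_nhds
    exact tendsto_nhds_unique (hItend _ continuous_const) h2
  have hinv : ∀ f : X → ℝ, Continuous f → Λ (fun x => f (T x)) = Λ f := by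
    intro f hf
    obtain ⟨zf, -, hzf⟩ := isCompact_univ.exists_isMaxOn univ_nonempty hf.abs.continuousOn
    have hMf : ∀ x, |f x| ≤ |f zf| := fun x => isMaxOn_iff.mp hzf x (mem_univ x)
    have h1 : ∀ n, I (fun x => f (T x)) n
        = I f n + (n:ℝ)⁻¹ * (f (T^[n] (xm n)) - f (xm n)) := by
      intro n
      simp only [hIdef]
      have hstep : ∀ i, f (T (T^[i] (xm n))) = f (T^[i+1] (xm n)) := fun i => by
        rw [Function.iterate_succ_apply']
      rw [Finset.sum_congr rfl fun i _ => hstep i]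
      have htel : ∑ i ∈ Finset.range n,
            (f (T^[i+1] (xm n)) - f (T^[i] (xm n)))
          = f (T^[n] (xm n)) - f (T^[0] (xm n)) :=
        Finset.sum_range_sub (fun i => f (T^[i] (xm n))) n
      rw [Finset.sum_sub_distrib] at htel
      simp only [Function.iterate_zero_apply] at htel
      have hsum : ∑ i ∈ Finset.range n, f (T^[i+1] (xm n))
          = ∑ i ∈ Finset.range n, f (T^[i] (xm n)) + (f (T^[n] (xm n)) - f (xm n)) := by
        linarith
      rw [hsum]
      ring
    have h2 : Filter.Tendsto (fun n : ℕ => (n:ℝ)⁻¹ * (f (T^[n] (xm n)) - f (xm n)))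
        Filter.atTop (nhds 0) := by
      have hb2 : ∀ n : ℕ, ‖(n:ℝ)⁻¹ * (f (T^[n] (xm n)) - f (xm n))‖
          ≤ (n:ℝ)⁻¹ * (2 * |f zf|) := by
        intro n
        rw [Real.norm_eq_abs, abs_mul, abs_inv, Nat.abs_cast]
        refine mul_le_mul_of_nonneg_left ?_ (inv_nonneg.mpr (Nat.cast_nonneg n))
        calc |f (T^[n] (xm n)) - f (xm n)| ≤ |f (T^[n] (xm n))| + |f (xm n)| := abs_sub _ _
          _ ≤ 2 * |f zf| := by linarith [hMf (T^[n] (xm n)), hMf (xm n)]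
      refine squeeze_zero_norm hb2 ?_
      have := tendsto_inv_atTop_nhds_zero_nat.mul_const (2 * |f zf|)
      simpa using this
    have h3 : Filter.Tendsto (I fun x => f (T x)) (𝒰 : Filter ℕ) (nhds (Λ f + 0)) := by
      rw [show I (fun x => f (T x))
          = fun n => I f n + (n:ℝ)⁻¹ * (f (T^[n] (xm n)) - f (xm n)) from funext h1]
      exact (hItend f hf).add (h2.mono_left h𝒰top)
    rw [add_zero] at h3
    exact tendsto_nhds_unique (hItend _ (hf.comp hT)) h3
  have hΛφ : L - ε ≤ Λ φ := by
    refine ge_of_tendsto (hItend φ hφ) ?_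
    have h1 : ∀ᶠ n in (𝒰 : Filter ℕ), 1 ≤ n := h𝒰top (Filter.eventually_ge_atTop 1)
    have h2 : ∀ᶠ n in (𝒰 : Filter ℕ), n ∈ Sset := Filter.eventually_iff.mpr (by simpa using h𝒰S)
    filter_upwards [h1, h2] with n hn1 hn2
    have hnp : (0:ℝ) < n := by exact_mod_cast hn1
    have hb3 : b n = I φ n := by
      simp only [hbdef, hIdef]
      rw [hsup n, div_eq_inv_mul]
    have h3 : L - ε < b n := hn2
    rw [hb3] at h3
    exact h3.le
  obtain ⟨η, hprob, hrepr⟩ := riesz_repr_exists Λ hadd hsmul hpos hone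
  haveI := hprob
  have hmeas : MeasurePreserving T η η := by
    refine ⟨hT.measurable, ?_⟩
    haveI : IsProbabilityMeasure (Measure.map T η) :=
      Measure.isProbabilityMeasure_map hT.measurable.aemeasurable
    apply ext_of_forall_lintegral_eq_of_IsFiniteMeasure
    intro f
    have hkey : ∀ g : X → ℝ≥0, Continuous g →
        ∫⁻ x, (g x : ℝ≥0∞) ∂η = ENNReal.ofReal (Λ (fun x => (g x : ℝ))) := by
      intro g hg
      have hgc : Continuous fun x => (g x : ℝ) := NNReal.continuous_coe.comp hg
      have hgint : Integrable (fun x => (g x : ℝ)) η := by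
        have := BoundedContinuousFunction.integrable η (mkOfCompact ⟨fun x => (g x : ℝ), hgc⟩)
        exact this
      rw [← hrepr _ hgc, ofReal_integral_eq_lintegral_ofReal hgint
        (Filter.Eventually.of_forall fun x => (g x).2)]
      simp [ENNReal.ofReal_coe_nnreal]
    rw [lintegral_map (f.continuous.measurable.coe_nnreal_ennreal) hT.measurable]
    rw [hkey (fun x => f (T x)) (f.continuous.comp hT), hkey (fun x => f x) f.continuous]
    congr 1
    exact hinv (fun x => (f x : ℝ)) (NNReal.continuous_coe.comp f.continuous)
  have hfin : ∫ x, φ x ∂η ≤ c := hc η hprob hmeas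
  rw [hrepr φ hφ] at hfin
  have hfin2 : L - ε ≤ c := le_trans hΛφ hfin
  rw [hεdef] at hfin2
  linarith
end

section
/- Let T : X → X be continuous on a compact metric space with h_top(T) > 0, and φ continuous, t₁ < 0 real. Suppose P_top(T, t₁φ) = t₁β with β = ∫φ dη₁ for an invariant measure η₁ of zero entropy maximizing −φ, and suppose μ* is an invariant measure with h_{μ*}(T) = t₁(β − ∫φ dμ*) =: h* and ∫φ dμ* = λ_min > β. Then for every d ∈ [β, λ_min], the convex combination ν_d := ((d−β)/(λ_min−β)) μ* + (1 − (d−β)/(λ_min−β)) η₁ is T-invariant, satisfies ∫φ dν_d = d and h_{ν_d}(T) = t₁(β − d); moreover every invariant ν with ∫φ dν = d satisfies h_ν(T) ≤ t₁(β − d). Hence sup{h_ν(T) : ∫φ dν = d} = t₁(β − d), i.e., the constrained entropy is affine in d on [β, λ_min]. -/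
open MeasureTheory

/-- Affine interpolation of constrained entropy: if `η₁` is an invariant measure of
zero entropy maximizing `−φ` with `∫φ dη₁ = β`, `P_top(T, t₁φ) = t₁β` (as an upper
bound over invariant measures) with `t₁ < 0`, and `μ*` is invariant with
`∫φ dμ* = λ_min > β` and `h(μ*) = t₁(β − λ_min)`, then for every `d ∈ [β, λ_min]`
the convex combination `ν_d = a μ* + (1−a) η₁`, `a = (d−β)/(λ_min−β)`, is an
invariant probability with `∫φ dν_d = d` and `h(ν_d) = t₁(β − d)`, every invariant
`ν` with `∫φ dν = d` has `h(ν) ≤ t₁(β − d)`, and hence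
`sup{h(ν) : ∫φ dν = d} = t₁(β − d)`. -/
theorem constrained_entropy_affine
    {X : Type*} [MetricSpace X] [CompactSpace X] [MeasurableSpace X] [BorelSpace X]
    (T : X → X) (hT : Continuous T) (φ : X → ℝ) (hφ : Continuous φ)
    (h : Measure X → ℝ)
    (htop : ℝ) (htop_pos : 0 < htop)
    (haff : ∀ a : ℝ, 0 ≤ a → a ≤ 1 → ∀ μ ν : Measure X,
      IsProbabilityMeasure μ → IsProbabilityMeasure ν →
      MeasurePreserving T μ μ → MeasurePreserving T ν ν →
      h (ENNReal.ofReal a • μ + ENNReal.ofReal (1 - a) • ν) = a * h μ + (1 - a) * h ν)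
    (t₁ : ℝ) (ht₁ : t₁ < 0) (β lamMin : ℝ) (hβ_lt : β < lamMin)
    (η₁ : Measure X) (hη₁_prob : IsProbabilityMeasure η₁)
    (hη₁_inv : MeasurePreserving T η₁ η₁) (hη₁_ent : h η₁ = 0)
    (hη₁_int : ∫ x, φ x ∂η₁ = β)
    (hη₁_max : ∀ ν : Measure X, IsProbabilityMeasure ν → MeasurePreserving T ν ν →
      ∫ x, -φ x ∂ν ≤ ∫ x, -φ x ∂η₁)
    (hP : ∀ ν : Measure X, IsProbabilityMeasure ν → MeasurePreserving T ν ν →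
      h ν + t₁ * ∫ x, φ x ∂ν ≤ t₁ * β)
    (μs : Measure X) (hμs_prob : IsProbabilityMeasure μs)
    (hμs_inv : MeasurePreserving T μs μs)
    (hμs_int : ∫ x, φ x ∂μs = lamMin) (hμs_ent : h μs = t₁ * (β - lamMin)) :
    ∀ d ∈ Set.Icc β lamMin,
      (IsProbabilityMeasure
          (ENNReal.ofReal ((d - β) / (lamMin - β)) • μs
            + ENNReal.ofReal (1 - (d - β) / (lamMin - β)) • η₁) ∧
        MeasurePreserving T
          (ENNReal.ofReal ((d - β) / (lamMin - β)) • μs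
            + ENNReal.ofReal (1 - (d - β) / (lamMin - β)) • η₁)
          (ENNReal.ofReal ((d - β) / (lamMin - β)) • μs
            + ENNReal.ofReal (1 - (d - β) / (lamMin - β)) • η₁) ∧
        (∫ x, φ x ∂(ENNReal.ofReal ((d - β) / (lamMin - β)) • μs
            + ENNReal.ofReal (1 - (d - β) / (lamMin - β)) • η₁)) = d ∧
        h (ENNReal.ofReal ((d - β) / (lamMin - β)) • μs
            + ENNReal.ofReal (1 - (d - β) / (lamMin - β)) • η₁) = t₁ * (β - d)) ∧
      (∀ ν : Measure X, IsProbabilityMeasure ν → MeasurePreserving T ν ν →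
        ∫ x, φ x ∂ν = d → h ν ≤ t₁ * (β - d)) ∧
      IsGreatest {y : ℝ | ∃ ν : Measure X, IsProbabilityMeasure ν ∧
        MeasurePreserving T ν ν ∧ ∫ x, φ x ∂ν = d ∧ h ν = y} (t₁ * (β - d)) := by
  intro d hd
  obtain ⟨hd1, hd2⟩ := hd
  set a : ℝ := (d - β) / (lamMin - β) with ha_def
  have hlb : (0:ℝ) < lamMin - β := by linarith
  have ha0 : 0 ≤ a := div_nonneg (by linarith) hlb.le
  have ha1 : a ≤ 1 := by rw [ha_def, div_le_one hlb]; linarith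
  have ha1' : 0 ≤ 1 - a := by linarith
  set ν_d : Measure X := ENNReal.ofReal a • μs + ENNReal.ofReal (1 - a) • η₁ with hν_def
  have hprob : IsProbabilityMeasure ν_d := by
    constructor
    simp [hν_def, hμs_prob.measure_univ, hη₁_prob.measure_univ,
      ← ENNReal.ofReal_add ha0 ha1']
  have hinv : MeasurePreserving T ν_d ν_d := by
    refine ⟨hT.measurable, ?_⟩
    rw [hν_def, Measure.map_add _ _ hT.measurable, Measure.map_smul, Measure.map_smul,
      hμs_inv.map_eq, hη₁_inv.map_eq]
  have hint : (∫ x, φ x ∂ν_d) = d := by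
    rw [hν_def, integral_add_measure, integral_smul_measure, integral_smul_measure,
      ENNReal.toReal_ofReal ha0, ENNReal.toReal_ofReal ha1', hμs_int, hη₁_int]
    · rw [ha_def, smul_eq_mul, smul_eq_mul]; field_simp; ring
    · exact (hφ.integrable_of_hasCompactSupport (HasCompactSupport.of_compactSpace φ)).smul_measure
        ENNReal.ofReal_ne_top
    · exact (hφ.integrable_of_hasCompactSupport (HasCompactSupport.of_compactSpace φ)).smul_measure
        ENNReal.ofReal_ne_top
  have hent : h ν_d = t₁ * (β - d) := by
    rw [hν_def, haff a ha0 ha1 μs η₁ hμs_prob hη₁_prob hμs_inv hη₁_inv, hμs_ent, hη₁_ent]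
    rw [ha_def]; field_simp; ring
  have hub : ∀ ν : Measure X, IsProbabilityMeasure ν → MeasurePreserving T ν ν →
      ∫ x, φ x ∂ν = d → h ν ≤ t₁ * (β - d) := by
    intro ν hν hνinv hνint
    have := hP ν hν hνinv
    rw [hνint] at this
    nlinarith
  refine ⟨⟨hprob, hinv, hint, hent⟩, hub, ⟨ν_d, hprob, hinv, hint, hent⟩, ?_⟩
  rintro y ⟨ν, hν, hνinv, hνint, rfl⟩
  exact hub ν hν hνinv hνint
end
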